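/- Let X be a simplicial group, H = XN₁, L = XN₂. Then for h₁, h₂ ∈ H, the element s₁(h₁) s₁(h₂) s₁(h₁)⁻¹ s₀(h₁) s₁(h₂)⁻¹ s₀(h₁)⁻¹ of X₂ lies in XN₂ = Ker(d²₀) ∩ Ker(d²₁), i.e., the Moore-complex Peiffer lifting is well-defined as a map H × H → L. -/

import Mathlib

open CategoryTheory Simplicial

/-- For a simplicial group `X` and `h₁, h₂ ∈ XN₁ = Ker(d¹₀)`, the Moore-complex Peiffer
lifting `s₁(h₁) s₁(h₂) s₁(h₁)⁻¹ s₀(h₁) s₁(h₂)⁻¹ s₀(h₁)⁻¹ ∈ X₂` lies in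
`XN₂ = Ker(d²₀) ∩ Ker(d²₁)`. -/
theorem simplicialGroup_pf_mem_moore (X : SimplicialObject GrpCat)
    (h₁ h₂ : X _⦋1⦌) (hh₁ : X.δ (0 : Fin 2) h₁ = 1) (hh₂ : X.δ (0 : Fin 2) h₂ = 1) :
    X.δ (0 : Fin 3) (X.σ (1 : Fin 2) h₁ * X.σ (1 : Fin 2) h₂ * (X.σ (1 : Fin 2) h₁)⁻¹
      * X.σ (0 : Fin 2) h₁ * (X.σ (1 : Fin 2) h₂)⁻¹ * (X.σ (0 : Fin 2) h₁)⁻¹) = 1 ∧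
    X.δ (1 : Fin 3) (X.σ (1 : Fin 2) h₁ * X.σ (1 : Fin 2) h₂ * (X.σ (1 : Fin 2) h₁)⁻¹
      * X.σ (0 : Fin 2) h₁ * (X.σ (1 : Fin 2) h₂)⁻¹ * (X.σ (0 : Fin 2) h₁)⁻¹) = 1 := by
  have e1 : ∀ h : X _⦋1⦌, X.δ (0 : Fin 3) (X.σ (1 : Fin 2) h)
      = X.σ (0 : Fin 1) (X.δ (0 : Fin 2) h) := by
    intro h
    have w := X.δ_comp_σ_of_le (i := (0 : Fin 2)) (j := (0 : Fin 1)) (by simp)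
    rw [show Fin.succ (0 : Fin 1) = (1 : Fin 2) from rfl,
      show Fin.castSucc (0 : Fin 2) = (0 : Fin 3) from rfl] at w
    have := ConcreteCategory.congr_hom w h
    simpa [comp_apply] using this
  have e2 : ∀ h : X _⦋1⦌, X.δ (0 : Fin 3) (X.σ (0 : Fin 2) h) = h := by
    intro h
    have w := X.δ_comp_σ_self (i := (0 : Fin 2))
    rw [show Fin.castSucc (0 : Fin 2) = (0 : Fin 3) from rfl] at w
    have := ConcreteCategory.congr_hom w h
    simpa [comp_apply] using this
  have e3 : ∀ h : X _⦋1⦌, X.δ (1 : Fin 3) (X.σ (1 : Fin 2) h) = h := by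
    intro h
    have w := X.δ_comp_σ_self (i := (1 : Fin 2))
    rw [show Fin.castSucc (1 : Fin 2) = (1 : Fin 3) from rfl] at w
    have := ConcreteCategory.congr_hom w h
    simpa [comp_apply] using this
  have e4 : ∀ h : X _⦋1⦌, X.δ (1 : Fin 3) (X.σ (0 : Fin 2) h) = h := by
    intro h
    have w := X.δ_comp_σ_succ (i := (0 : Fin 2))
    rw [show Fin.succ (0 : Fin 2) = (1 : Fin 3) from rfl] at w
    have := ConcreteCategory.congr_hom w h
    simpa [comp_apply] using this
  constructor
  · simp only [map_mul, map_inv, e1, e2, hh₁, hh₂, map_one]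
    group
  · simp only [map_mul, map_inv, e3, e4]
    group
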